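/- Let Ω ⊆ 𝔽ⁿ be a finitely generated P-closed set with finite P-basis B = {b₁,…,b_M} and let {F₁,…,F_M} be a dual P-basis of B. Then Im(E_Ω) is a left 𝔽-vector space of dimension M = Rk(Ω), and the evaluations E_Ω(F₁), E_Ω(F₂), …, E_Ω(F_M) ∈ 𝔽^Ω form a left 𝔽-basis of Im(E_Ω). -/

import Mathlib

/- Common setup: free multivariate skew polynomial rings over a division ring. -/

open Matrix Finsupp

/-- The underlying left `𝔽`-module of the free multivariate skew polynomial ring:
the free left `𝔽`-module with basis the free monoid on `n` symbols. -/
abbrev SkewPoly (𝔽 : Type*) [DivisionRing 𝔽] (n : ℕ) : Type _ := FreeMonoid (Fin n) →₀ 𝔽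

namespace SkewPoly

variable {𝔽 : Type*} [DivisionRing 𝔽] {n : ℕ}

/-- The variable `xᵢ` as a skew polynomial. -/
noncomputable def X (𝔽 : Type*) [DivisionRing 𝔽] {n : ℕ} (i : Fin n) : SkewPoly 𝔽 n :=
  Finsupp.single (FreeMonoid.of i) 1

/-- The constant `a` as a skew polynomial (coefficient on the empty word). -/
noncomputable def C {𝔽 : Type*} [DivisionRing 𝔽] (n : ℕ) (a : 𝔽) :
    SkewPoly 𝔽 n := Finsupp.single 1 a

/-- The degree of a skew polynomial: the maximal length of a word in its support
(`⊥` for the zero polynomial). -/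
noncomputable def deg (F : SkewPoly 𝔽 n) : WithBot ℕ :=
  F.support.sup fun m => ((FreeMonoid.length m : ℕ) : WithBot ℕ)

/-- A matrix morphism `σ : 𝔽 → Mₙ(𝔽)`: a unital ring homomorphism. -/
def IsMatrixMorphism (σ : 𝔽 → Matrix (Fin n) (Fin n) 𝔽) : Prop :=
  σ 1 = 1 ∧ (∀ a b : 𝔽, σ (a + b) = σ a + σ b) ∧ (∀ a b : 𝔽, σ (a * b) = σ a * σ b)

/-- A `σ`-vector derivation `δ : 𝔽 → 𝔽ⁿ`: additive with `δ(ab) = σ(a)δ(b) + δ(a)b`. -/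
def IsVectorDerivation (σ : 𝔽 → Matrix (Fin n) (Fin n) 𝔽) (δ : 𝔽 → Fin n → 𝔽) : Prop :=
  (∀ a b : 𝔽, δ (a + b) = δ a + δ b) ∧
    (∀ a b : 𝔽, δ (a * b) = σ a *ᵥ δ b + fun i => δ a i * b)

/-- A multiplication on the free module `SkewPoly 𝔽 n` making it a ring (with the
existing addition) whose identity is the empty word, which restricts to concatenation
on monomials, is additive on degrees of nonzero elements, and for which left
multiplication by constants is scalar multiplication. -/
structure RawMul (𝔽 : Type*) [DivisionRing 𝔽] (n : ℕ) where
  /-- the multiplication -/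
  mul : SkewPoly 𝔽 n → SkewPoly 𝔽 n → SkewPoly 𝔽 n
  mul_add : ∀ F G H : SkewPoly 𝔽 n, mul F (G + H) = mul F G + mul F H
  add_mul : ∀ F G H : SkewPoly 𝔽 n, mul (F + G) H = mul F H + mul G H
  mul_assoc : ∀ F G H : SkewPoly 𝔽 n, mul (mul F G) H = mul F (mul G H)
  one_mul : ∀ F : SkewPoly 𝔽 n, mul (C n 1) F = F
  mul_one : ∀ F : SkewPoly 𝔽 n, mul F (C n 1) = F
  mono_mul_mono : ∀ m m' : FreeMonoid (Fin n),
    mul (Finsupp.single m 1) (Finsupp.single m' 1) = Finsupp.single (m * m') 1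
  const_mul : ∀ (a : 𝔽) (F : SkewPoly 𝔽 n), mul (C n a) F = a • F
  deg_mul : ∀ F G : SkewPoly 𝔽 n, F ≠ 0 → G ≠ 0 → deg (mul F G) = deg F + deg G

/-- The multiplication `S` satisfies the commutation rule
`xᵢ a = Σⱼ σ_{i,j}(a) xⱼ + δᵢ(a)`. -/
def HasCommRule (S : RawMul 𝔽 n) (σ : 𝔽 → Matrix (Fin n) (Fin n) 𝔽)
    (δ : 𝔽 → Fin n → 𝔽) : Prop :=
  ∀ (i : Fin n) (a : 𝔽),
    S.mul (X 𝔽 i) (C n a) =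
      (∑ j : Fin n, Finsupp.single (FreeMonoid.of j) (σ a i j)) + C n (δ a i)

/-- `F = Σᵢ Gᵢ (xᵢ - aᵢ) + b`, i.e. `b` is a remainder of `F` upon right division
by `x₁ - a₁, …, xₙ - aₙ`; equivalently `F - b` lies in the left ideal generated by
the `xᵢ - aᵢ`. -/
def Decomposes (S : RawMul 𝔽 n) (a : Fin n → 𝔽) (F : SkewPoly 𝔽 n) (b : 𝔽) : Prop :=
  ∃ G : Fin n → SkewPoly 𝔽 n,
    F = (∑ i : Fin n, S.mul (G i) (X 𝔽 i - C n (a i))) + C n b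

/-- The evaluation of `F` at the point `a`: the unique `b ∈ 𝔽` such that `F - b`
lies in the left ideal generated by `x₁ - a₁, …, xₙ - aₙ`. -/
noncomputable def eval (S : RawMul 𝔽 n) (a : Fin n → 𝔽) (F : SkewPoly 𝔽 n) : 𝔽 :=
  letI := Classical.propDecidable (∃ b : 𝔽, Decomposes S a F b)
  if h : ∃ b : 𝔽, Decomposes S a F b then h.choose else 0

/-- The `(σ,δ)`-conjugate `a^c = σ(c) a c⁻¹ + δ(c) c⁻¹` of `a` with respect to `c`. -/
noncomputable def conj (σ : 𝔽 → Matrix (Fin n) (Fin n) 𝔽) (δ : 𝔽 → Fin n → 𝔽)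
    (a : Fin n → 𝔽) (c : 𝔽) : Fin n → 𝔽 :=
  fun i => (σ c *ᵥ a) i * c⁻¹ + δ c i * c⁻¹

/-- `I(Ω)`: the set of skew polynomials vanishing at every point of `Ω`. -/
def zeroIdeal (S : RawMul 𝔽 n) (Ω : Set (Fin n → 𝔽)) : Set (SkewPoly 𝔽 n) :=
  {F | ∀ a ∈ Ω, eval S a F = 0}

/-- The left ideal of `SkewPoly 𝔽 n` generated by `x₁ - a₁, …, xₙ - aₙ`
(the set of sums of left multiples of the generators). -/
def pointIdeal (S : RawMul 𝔽 n) (a : Fin n → 𝔽) : Set (SkewPoly 𝔽 n) :=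
  {F | ∃ G : Fin n → SkewPoly 𝔽 n, F = ∑ i : Fin n, S.mul (G i) (X 𝔽 i - C n (a i))}

/-- The P-closure `Ω̄ = Z(I(Ω))` of a set of points `Ω`. -/
def pClosure (S : RawMul 𝔽 n) (Ω : Set (Fin n → 𝔽)) : Set (Fin n → 𝔽) :=
  {a | ∀ F ∈ zeroIdeal S Ω, eval S a F = 0}

/-- `Ω` is P-closed if it equals its P-closure. -/
def IsPClosed (S : RawMul 𝔽 n) (Ω : Set (Fin n → 𝔽)) : Prop := pClosure S Ω = Ω

/-- `B` is P-independent: no point of `B` lies in the P-closure of the rest. -/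
def PIndep (S : RawMul 𝔽 n) (B : Set (Fin n → 𝔽)) : Prop :=
  ∀ a ∈ B, a ∉ pClosure S (B \ {a})

/-- `B` is a P-basis of `Ω`: a P-independent subset of `Ω` whose P-closure is `Ω`. -/
def IsPBasis (S : RawMul 𝔽 n) (B Ω : Set (Fin n → 𝔽)) : Prop :=
  B ⊆ Ω ∧ PIndep S B ∧ pClosure S B = Ω

/-- `Ω` is finitely generated: it is the P-closure of a finite subset of itself. -/
def FinGen (S : RawMul 𝔽 n) (Ω : Set (Fin n → 𝔽)) : Prop :=
  ∃ G : Set (Fin n → 𝔽), G.Finite ∧ G ⊆ Ω ∧ pClosure S G = Ω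

/-- The rank of a P-closed set: the (common) cardinality of its P-bases. -/
noncomputable def pRank (S : RawMul 𝔽 n) (Ω : Set (Fin n → 𝔽)) : ℕ :=
  sInf {k : ℕ | ∃ B : Finset (Fin n → 𝔽), IsPBasis S ↑B Ω ∧ B.card = k}

/-- The image of the evaluation map `E_Ω : R → 𝔽^Ω`, as a left `𝔽`-subspace of `𝔽^Ω`
(the span of the image; the image is itself a subspace since evaluation is left linear). -/
noncomputable def evalSpan (S : RawMul 𝔽 n) (Ω : Set (Fin n → 𝔽)) :
    Submodule 𝔽 (↥Ω → 𝔽) :=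
  Submodule.span 𝔽 (Set.range fun F : SkewPoly 𝔽 n => fun a : ↥Ω => eval S ↑a F)

/-- `I` is a two-sided ideal with respect to the multiplication `S`. -/
def IsTwoSidedIdealSet (S : RawMul 𝔽 n) (I : Set (SkewPoly 𝔽 n)) : Prop :=
  (0 : SkewPoly 𝔽 n) ∈ I ∧ (∀ F ∈ I, ∀ G ∈ I, F + G ∈ I) ∧ (∀ F ∈ I, -F ∈ I) ∧
    (∀ F ∈ I, ∀ G : SkewPoly 𝔽 n, S.mul G F ∈ I) ∧
    (∀ F ∈ I, ∀ G : SkewPoly 𝔽 n, S.mul F G ∈ I)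


/-- The left row-rank of the skew Vandermonde matrix `V_d(G)`: the dimension of the
left `𝔽`-span of its rows `(N_m(c))_{c ∈ G}`, indexed by the words `m` of length `< d`,
where `N_m(c)` is the evaluation of the monomial `m` at the point `c`. -/
noncomputable def vandermondeRank (S : RawMul 𝔽 n) (G : Finset (Fin n → 𝔽)) (d : ℕ) :
    Cardinal :=
  Module.rank 𝔽 ↥(Submodule.span 𝔽 (Set.range
    fun m : {m : FreeMonoid (Fin n) // FreeMonoid.length m < d} =>
      fun c : ↥G => eval S ↑c (Finsupp.single (m : FreeMonoid (Fin n)) (1 : 𝔽))))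

end SkewPoly

open SkewPoly


namespace SkewPoly

section Aux

variable {𝔽 : Type*} [DivisionRing 𝔽] {n : ℕ} (S : RawMul 𝔽 n)

lemma zero_mul' (F : SkewPoly 𝔽 n) : S.mul 0 F = 0 := by
  have h := S.add_mul 0 0 F
  rw [add_zero] at h
  exact (left_eq_add.mp h)

lemma mul_zero' (F : SkewPoly 𝔽 n) : S.mul F 0 = 0 := by
  have h := S.mul_add F 0 0
  rw [add_zero] at h
  exact (left_eq_add.mp h)

lemma neg_mul' (F G : SkewPoly 𝔽 n) : S.mul (-F) G = -(S.mul F G) := by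
  have h := S.add_mul F (-F) G
  rw [add_neg_cancel, zero_mul'] at h
  exact eq_neg_of_add_eq_zero_right h.symm

lemma mul_neg' (F G : SkewPoly 𝔽 n) : S.mul F (-G) = -(S.mul F G) := by
  have h := S.mul_add F G (-G)
  rw [add_neg_cancel, mul_zero'] at h
  exact eq_neg_of_add_eq_zero_right h.symm

lemma sub_mul' (F F' G : SkewPoly 𝔽 n) : S.mul (F - F') G = S.mul F G - S.mul F' G := by
  rw [sub_eq_add_neg, S.add_mul, neg_mul', sub_eq_add_neg]

lemma mul_sub' (F G G' : SkewPoly 𝔽 n) : S.mul F (G - G') = S.mul F G - S.mul F G' := by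
  rw [sub_eq_add_neg, S.mul_add, mul_neg', sub_eq_add_neg]

lemma mul_sum' {ι : Type*} (K : SkewPoly 𝔽 n) (s : Finset ι) (f : ι → SkewPoly 𝔽 n) :
    S.mul K (∑ i ∈ s, f i) = ∑ i ∈ s, S.mul K (f i) := by
  classical
  induction s using Finset.induction_on with
  | empty => simp [mul_zero']
  | @insert x s hx ih =>
    rw [Finset.sum_insert hx, Finset.sum_insert hx, S.mul_add, ih]

lemma C_zero : C n (0 : 𝔽) = 0 := Finsupp.single_zero 1

lemma C_ne_zero {c : 𝔽} (hc : c ≠ 0) : C n c ≠ 0 :=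
  fun h0 => hc (Finsupp.single_eq_zero.mp h0)

lemma single_ne_zero' {m : FreeMonoid (Fin n)} {c : 𝔽} (hc : c ≠ 0) :
    (Finsupp.single m c : SkewPoly 𝔽 n) ≠ 0 :=
  fun h0 => hc (Finsupp.single_eq_zero.mp h0)

lemma C_smul (c b : 𝔽) : c • C n b = C n (c * b) := by
  show c • (Finsupp.single 1 b : SkewPoly 𝔽 n) = Finsupp.single 1 (c * b)
  rw [Finsupp.smul_single, smul_eq_mul]

lemma single_eq_C_mul (m : FreeMonoid (Fin n)) (c : 𝔽) :
    (Finsupp.single m c : SkewPoly 𝔽 n) = S.mul (C n c) (Finsupp.single m 1) := by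
  rw [S.const_mul, Finsupp.smul_single, smul_eq_mul, mul_one]

lemma single_mul_single (m m' : FreeMonoid (Fin n)) (c : 𝔽) :
    S.mul (Finsupp.single m c) (Finsupp.single m' 1) = Finsupp.single (m * m') c := by
  rw [single_eq_C_mul S m c, S.mul_assoc, S.mono_mul_mono, S.const_mul,
    Finsupp.smul_single, smul_eq_mul, mul_one]

lemma mul_X_eq (K : SkewPoly 𝔽 n) (i : Fin n) :
    S.mul K (X 𝔽 i) = Finsupp.mapDomain (· * FreeMonoid.of i) K := by
  induction K using Finsupp.induction_linear with
  | zero => simp [zero_mul']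
  | add f g hf hg => rw [S.add_mul, Finsupp.mapDomain_add, hf, hg]
  | single m c =>
    rw [show X 𝔽 i = Finsupp.single (FreeMonoid.of i) (1 : 𝔽) from rfl,
      single_mul_single, Finsupp.mapDomain_single]

lemma deg_single (m : FreeMonoid (Fin n)) {c : 𝔽} (hc : c ≠ 0) :
    deg (Finsupp.single m c : SkewPoly 𝔽 n) = ((FreeMonoid.length m : ℕ) : WithBot ℕ) := by
  unfold deg
  rw [Finsupp.support_single_ne_zero _ hc, Finset.sup_singleton]

lemma deg_C {a : 𝔽} (ha : a ≠ 0) : deg (C n a) = ((0 : ℕ) : WithBot ℕ) := by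
  rw [C, deg_single _ ha, FreeMonoid.length_one]

lemma length_le_of_mem_support {F : SkewPoly 𝔽 n} {w : FreeMonoid (Fin n)}
    (h : w ∈ F.support) : ((FreeMonoid.length w : ℕ) : WithBot ℕ) ≤ deg F := by
  exact Finset.le_sup (f := fun m : FreeMonoid (Fin n) =>
    ((FreeMonoid.length m : ℕ) : WithBot ℕ)) h

lemma mulXi_injective (i : Fin n) :
    Function.Injective (fun m : FreeMonoid (Fin n) => m * FreeMonoid.of i) :=
  fun _ _ h => mul_right_cancel h

/-! ### Decomposition lemmas -/

variable (a : Fin n → 𝔽)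

lemma decomposes_zero : Decomposes S a 0 0 :=
  ⟨0, by simp [zero_mul', C, Finsupp.single_zero]⟩

lemma decomposes_C (b : 𝔽) : Decomposes S a (C n b) b :=
  ⟨0, by simp [zero_mul']⟩

lemma decomposes_add {F₁ F₂ : SkewPoly 𝔽 n} {b₁ b₂ : 𝔽}
    (h₁ : Decomposes S a F₁ b₁) (h₂ : Decomposes S a F₂ b₂) :
    Decomposes S a (F₁ + F₂) (b₁ + b₂) := by
  obtain ⟨G₁, hG₁⟩ := h₁
  obtain ⟨G₂, hG₂⟩ := h₂
  refine ⟨G₁ + G₂, ?_⟩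
  rw [hG₁, hG₂]
  simp only [Pi.add_apply, S.add_mul, Finset.sum_add_distrib, C, Finsupp.single_add]
  abel

lemma decomposes_smul (c : 𝔽) {F : SkewPoly 𝔽 n} {b : 𝔽} (h : Decomposes S a F b) :
    Decomposes S a (c • F) (c * b) := by
  obtain ⟨G, hG⟩ := h
  refine ⟨fun i => S.mul (C n c) (G i), ?_⟩
  rw [← S.const_mul c F, hG, S.mul_add, mul_sum']
  congr 1
  · exact Finset.sum_congr rfl fun i _ => (S.mul_assoc _ _ _).symm
  · rw [S.const_mul, C_smul]

/-- Existence of a decomposition. -/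
lemma exists_decomposes (F : SkewPoly 𝔽 n) : ∃ b, Decomposes S a F b := by
  classical
  obtain ⟨d, hd⟩ : ∃ d, ∀ m ∈ F.support, FreeMonoid.length m < d :=
    ⟨F.support.sup FreeMonoid.length + 1, fun m hm => Nat.lt_succ_of_le (Finset.le_sup hm)⟩
  induction d generalizing F with
  | zero =>
    have hF : F = 0 := Finsupp.support_eq_empty.mp
      (Finset.eq_empty_of_forall_notMem fun m hm => absurd (hd m hm) (Nat.not_lt_zero _))
    exact ⟨0, hF ▸ decomposes_zero S a⟩
  | succ d ih =>
    revert hd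
    induction F using Finsupp.induction with
    | zero => exact fun _ => ⟨0, decomposes_zero S a⟩
    | single_add m c f hm hc ihf =>
      intro hd
      have hdf : ∀ w ∈ f.support, FreeMonoid.length w < d + 1 := by
        intro w hw
        refine hd w ?_
        have hwm : m ≠ w := fun h => hm (h ▸ hw)
        rw [Finsupp.mem_support_iff, Finsupp.add_apply, Finsupp.single_apply, if_neg hwm,
          zero_add]
        exact Finsupp.mem_support_iff.mp hw
      have hdm : FreeMonoid.length m < d + 1 := by
        refine hd m ?_
        rw [Finsupp.mem_support_iff, Finsupp.add_apply, Finsupp.single_eq_same,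
          Finsupp.notMem_support_iff.mp hm, add_zero]
        exact hc
      obtain ⟨b₂, hb₂⟩ := ihf hdf
      -- decompose the monomial `single m c`
      obtain ⟨b₁, hb₁⟩ : ∃ b, Decomposes S a (Finsupp.single m c) b := by
        rcases eq_or_ne m 1 with rfl | hm1
        · exact ⟨c, decomposes_C S a c⟩
        -- write m = m' * of i
        obtain ⟨L, i, hL⟩ := (List.eq_nil_or_concat (FreeMonoid.toList m)).resolve_left
          (fun h => hm1 (by
            have := congrArg FreeMonoid.ofList h
            simpa using this))
        set m' : FreeMonoid (Fin n) := FreeMonoid.ofList L with hm'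
        have hmm : m = m' * FreeMonoid.of i := by
          apply FreeMonoid.toList.injective
          rw [FreeMonoid.toList_mul, hL, hm', FreeMonoid.toList_ofList, FreeMonoid.toList_of,
            List.concat_eq_append]
        have hlen : FreeMonoid.length m = FreeMonoid.length m' + 1 := by
          rw [hmm, FreeMonoid.length_mul, FreeMonoid.length_of]
        have hlm' : FreeMonoid.length m' < d := by omega
        -- single m c = T1 + T2
        have hsplit : (Finsupp.single m c : SkewPoly 𝔽 n) =
            S.mul (Finsupp.single m' c) (X 𝔽 i - C n (a i)) +
              S.mul (Finsupp.single m' c) (C n (a i)) := by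
          rw [← S.mul_add, sub_add_cancel,
            show X 𝔽 i = Finsupp.single (FreeMonoid.of i) (1 : 𝔽) from rfl,
            single_mul_single, ← hmm]
        -- T1 decomposes with remainder 0
        have hT1 : Decomposes S a (S.mul (Finsupp.single m' c) (X 𝔽 i - C n (a i))) 0 := by
          refine ⟨fun j => if j = i then Finsupp.single m' c else 0, ?_⟩
          have hsum : ∑ j : Fin n,
              S.mul (if j = i then (Finsupp.single m' c : SkewPoly 𝔽 n) else 0)
                (X 𝔽 j - C n (a j)) =
              S.mul (Finsupp.single m' c) (X 𝔽 i - C n (a i)) := by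
            rw [Finset.sum_eq_single_of_mem i (Finset.mem_univ i)
              (fun j _ hj => by rw [if_neg hj, zero_mul'])]
            rw [if_pos rfl]
          beta_reduce
          rw [hsum, C_zero, add_zero]
        -- T2 decomposes by the outer induction hypothesis
        obtain ⟨b₃, hb₃⟩ : ∃ b, Decomposes S a (S.mul (Finsupp.single m' c) (C n (a i))) b := by
          rcases eq_or_ne (a i) 0 with hai | hai
          · rw [hai, C, Finsupp.single_zero, mul_zero']
            exact ⟨0, decomposes_zero S a⟩
          · refine ih _ (fun w hw => ?_)
            have hne1 : (Finsupp.single m' c : SkewPoly 𝔽 n) ≠ 0 := single_ne_zero' hc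
            have hne2 : (C n (a i) : SkewPoly 𝔽 n) ≠ 0 := C_ne_zero hai
            have hdeg := S.deg_mul _ _ hne1 hne2
            rw [deg_single _ hc, deg_C hai] at hdeg
            have hle := length_le_of_mem_support hw
            rw [hdeg] at hle
            have : FreeMonoid.length w ≤ FreeMonoid.length m' + 0 := by
              exact_mod_cast hle
            omega
        refine ⟨0 + b₃, ?_⟩
        rw [hsplit]
        exact decomposes_add S a hT1 hb₃
      exact ⟨b₁ + b₂, decomposes_add S a hb₁ hb₂⟩

/-- Core of uniqueness: a constant in the point ideal is zero. -/
lemma eq_zero_of_sum_eq_C (K : Fin n → SkewPoly 𝔽 n) (c : 𝔽)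
    (h : ∑ i : Fin n, S.mul (K i) (X 𝔽 i - C n (a i)) = C n c) : c = 0 := by
  classical
  by_contra hc
  by_cases hK : ∀ i, K i = 0
  · simp only [hK, zero_mul', Finset.sum_const_zero] at h
    exact hc (Finsupp.single_eq_zero.mp h.symm)
  push_neg at hK
  obtain ⟨i₀, hi₀⟩ := hK
  obtain ⟨m₀, hm₀⟩ := Finsupp.support_nonempty_iff.mpr hi₀
  set s : Finset ((_ : Fin n) × FreeMonoid (Fin n)) :=
    Finset.univ.sigma (fun i => (K i).support) with hs
  have hsne : s.Nonempty := ⟨⟨i₀, m₀⟩, Finset.mem_sigma.mpr ⟨Finset.mem_univ _, hm₀⟩⟩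
  set d : ℕ := s.sup (fun p => FreeMonoid.length p.2) with hdd
  have hbound : ∀ i, ∀ m ∈ (K i).support, FreeMonoid.length m ≤ d := by
    intro i m hm
    rw [hdd, hs]
    exact Finset.le_sup (f := fun p : (_ : Fin n) × FreeMonoid (Fin n) => FreeMonoid.length p.2)
      (b := (⟨i, m⟩ : (_ : Fin n) × FreeMonoid (Fin n)))
      (Finset.mem_sigma.mpr ⟨Finset.mem_univ i, hm⟩)
  obtain ⟨⟨i₁, m₁⟩, hp, hdp⟩ := s.exists_mem_eq_sup hsne (fun p => FreeMonoid.length p.2)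
  have hm₁ : m₁ ∈ (K i₁).support := (Finset.mem_sigma.mp hp).2
  have hlm₁ : FreeMonoid.length m₁ = d := hdp.symm
  -- rewrite the hypothesis
  have h' : ∑ i : Fin n, S.mul (K i) (X 𝔽 i) =
      C n c + ∑ i : Fin n, S.mul (K i) (C n (a i)) := by
    rw [← h]
    simp only [mul_sub', Finset.sum_sub_distrib]
    abel
  -- evaluate coefficients at the word w = m₁ * of i₁
  set w : FreeMonoid (Fin n) := m₁ * FreeMonoid.of i₁ with hw
  have hlw : FreeMonoid.length w = d + 1 := by
    rw [hw, FreeMonoid.length_mul, FreeMonoid.length_of, hlm₁]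
  have hcoeff := congrArg (fun F : SkewPoly 𝔽 n => F w) h'
  simp only [Finsupp.finset_sum_apply, Finsupp.add_apply] at hcoeff
  -- LHS coefficient
  have hL : ∑ i : Fin n, (S.mul (K i) (X 𝔽 i)) w = K i₁ m₁ := by
    rw [Finset.sum_eq_single_of_mem i₁ (Finset.mem_univ i₁)]
    · rw [mul_X_eq, hw, Finsupp.mapDomain_apply (mulXi_injective i₁)]
    · intro j _ hj
      rw [mul_X_eq, Finsupp.mapDomain_notin_range]
      rintro ⟨m, hm⟩
      have := congrArg FreeMonoid.toList hm
      rw [FreeMonoid.toList_mul, FreeMonoid.toList_mul, FreeMonoid.toList_of,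
        FreeMonoid.toList_of, ← List.concat_eq_append, ← List.concat_eq_append] at this
      exact hj (List.concat_inj.mp this).2
  -- RHS coefficients vanish
  have hC0 : (C n c) w = 0 := by
    rw [C, Finsupp.single_apply_eq_zero]
    intro hw1
    rw [hw1, FreeMonoid.length_one] at hlw
    omega
  have hU0 : ∀ i : Fin n, (S.mul (K i) (C n (a i))) w = 0 := by
    intro i
    rcases eq_or_ne (K i) 0 with hKi | hKi
    · rw [hKi, zero_mul', Finsupp.coe_zero, Pi.zero_apply]
    rcases eq_or_ne (a i) 0 with hai | hai
    · rw [hai, C, Finsupp.single_zero, mul_zero', Finsupp.coe_zero, Pi.zero_apply]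
    refine Finsupp.notMem_support_iff.mp (fun hmem => ?_)
    have hdeg := S.deg_mul (K i) (C n (a i)) hKi (C_ne_zero hai)
    rw [deg_C hai] at hdeg
    have hKd : deg (K i) ≤ ((d : ℕ) : WithBot ℕ) :=
      Finset.sup_le fun m hm => by exact_mod_cast hbound i m hm
    have hle := length_le_of_mem_support hmem
    rw [hdeg, Nat.cast_zero, add_zero] at hle
    have : ((FreeMonoid.length w : ℕ) : WithBot ℕ) ≤ ((d : ℕ) : WithBot ℕ) := hle.trans hKd
    have : FreeMonoid.length w ≤ d := by exact_mod_cast this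
    omega
  rw [hL, hC0, Finset.sum_congr rfl (fun i _ => hU0 i), Finset.sum_const_zero,
    add_zero] at hcoeff
  exact (Finsupp.mem_support_iff.mp hm₁) hcoeff

lemma decomposes_unique {F : SkewPoly 𝔽 n} {b b' : 𝔽}
    (h : Decomposes S a F b) (h' : Decomposes S a F b') : b = b' := by
  obtain ⟨G, hG⟩ := h
  obtain ⟨G', hG'⟩ := h'
  have key : ∑ i : Fin n, S.mul (G i - G' i) (X 𝔽 i - C n (a i)) = C n (b' - b) := by
    simp only [sub_mul', Finset.sum_sub_distrib, C, Finsupp.single_sub]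
    exact sub_eq_sub_iff_add_eq_add.mpr ((hG.symm.trans hG').trans (add_comm _ _))
  have := eq_zero_of_sum_eq_C S a _ _ key
  have := sub_eq_zero.mp this
  exact this.symm

/-! ### Evaluation lemmas -/

lemma eval_eq {F : SkewPoly 𝔽 n} {b : 𝔽} (h : Decomposes S a F b) : eval S a F = b := by
  have hex : ∃ b, Decomposes S a F b := ⟨b, h⟩
  unfold eval
  rw [dif_pos hex]
  exact decomposes_unique S a hex.choose_spec h

lemma eval_decomposes (F : SkewPoly 𝔽 n) : Decomposes S a F (eval S a F) := by
  obtain ⟨b, h⟩ := exists_decomposes S a F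
  rw [eval_eq S a h]
  exact h

lemma eval_add (F G : SkewPoly 𝔽 n) :
    eval S a (F + G) = eval S a F + eval S a G :=
  eval_eq S a (decomposes_add S a (eval_decomposes S a F) (eval_decomposes S a G))

lemma eval_smul (c : 𝔽) (F : SkewPoly 𝔽 n) :
    eval S a (c • F) = c * eval S a F :=
  eval_eq S a (decomposes_smul S a c (eval_decomposes S a F))

lemma eval_C (b : 𝔽) : eval S a (C n b) = b := eval_eq S a (decomposes_C S a b)

lemma eval_zero : eval S a 0 = 0 := eval_eq S a (decomposes_zero S a)

lemma eval_sub (F G : SkewPoly 𝔽 n) :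
    eval S a (F - G) = eval S a F - eval S a G := by
  have h := eval_add S a (F - G) G
  rw [sub_add_cancel] at h
  exact eq_sub_of_add_eq h.symm

end Aux

end SkewPoly

namespace SkewPoly

lemma eval_sum {𝔽 : Type*} [DivisionRing 𝔽] {n : ℕ} (S : RawMul 𝔽 n) (a : Fin n → 𝔽)
    {ι : Type*} (s : Finset ι) (f : ι → SkewPoly 𝔽 n) :
    eval S a (∑ i ∈ s, f i) = ∑ i ∈ s, eval S a (f i) := by
  classical
  induction s using Finset.induction_on with
  | empty => simpa using eval_zero S a
  | @insert x s hx ih => rw [Finset.sum_insert hx, Finset.sum_insert hx, eval_add, ih]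

end SkewPoly

/-- For a finitely generated P-closed set `Ω` with P-basis
`b₁, …, b_M` and dual P-basis `F₁, …, F_M`: the image of `E_Ω` has dimension
`M = Rk(Ω)` and the evaluations `E_Ω(Fᵢ)` form a left `𝔽`-basis of it. -/
theorem stmt17 {𝔽 : Type*} [DivisionRing 𝔽] {n : ℕ} (hn : 0 < n)
    (σ : 𝔽 → Matrix (Fin n) (Fin n) 𝔽) (δ : 𝔽 → Fin n → 𝔽)
    (hσ : IsMatrixMorphism σ) (hδ : IsVectorDerivation σ δ)
    (S : RawMul 𝔽 n) (hS : HasCommRule S σ δ)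
    (Ω : Set (Fin n → 𝔽)) (hΩ : IsPClosed S Ω) (hfg : FinGen S Ω)
    (M : ℕ) (b : Fin M → (Fin n → 𝔽)) (hbinj : Function.Injective b)
    (hB : IsPBasis S (Set.range b) Ω) (F : Fin M → SkewPoly 𝔽 n)
    (hdual : ∀ i j : Fin M, eval S (b j) (F i) = if i = j then 1 else 0) :
    Module.rank 𝔽 ↥(evalSpan S Ω) = (M : Cardinal) ∧ pRank S Ω = M ∧
    LinearIndependent 𝔽 (fun i : Fin M => (fun a : ↥Ω => eval S (↑a) (F i))) ∧
    Submodule.span 𝔽 (Set.range fun i : Fin M => (fun a : ↥Ω => eval S (↑a) (F i))) =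
      evalSpan S Ω := by
  classical
  obtain ⟨hBsub, hBindep, hBclo⟩ := hB
  set v : Fin M → (↥Ω → 𝔽) := fun i => fun a : ↥Ω => eval S (↑a) (F i) with hv
  set E : SkewPoly 𝔽 n →ₗ[𝔽] (↥Ω → 𝔽) :=
    { toFun := fun G => fun a : ↥Ω => eval S (↑a) G
      map_add' := fun G H => funext fun a => eval_add S (↑a) G H
      map_smul' := fun c G => funext fun a => eval_smul S (↑a) c G } with hE
  have hspan : evalSpan S Ω = LinearMap.range E := by
    have h1 : evalSpan S Ω = Submodule.span 𝔽 (Set.range ⇑E) := rfl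
    rw [h1, ← LinearMap.coe_range, Submodule.span_eq]
  -- key identity: every evaluation function is a combination of the `v i`
  have key : ∀ G : SkewPoly 𝔽 n, E G = ∑ i : Fin M, (eval S (b i) G) • v i := by
    intro G
    set c : Fin M → 𝔽 := fun i => eval S (b i) G with hc
    set H : SkewPoly 𝔽 n := G - ∑ i : Fin M, c i • F i with hH
    have hHval : ∀ x : Fin n → 𝔽,
        eval S x H = eval S x G - ∑ i : Fin M, c i * eval S x (F i) := by
      intro x
      rw [hH, eval_sub, eval_sum]
      simp only [eval_smul]
    have hHzero : ∀ x ∈ Set.range b, eval S x H = 0 := by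
      rintro x ⟨j, rfl⟩
      rw [hHval]
      have hsum : ∑ i : Fin M, c i * eval S (b j) (F i) = c j := by
        simp [hdual, mul_ite, Finset.sum_ite_eq']
      rw [hsum, hc]
      exact sub_self _
    funext a
    have haP : (a : Fin n → 𝔽) ∈ pClosure S (Set.range b) := by
      rw [hBclo]; exact a.2
    have hHa : eval S (↑a) H = 0 := haP H hHzero
    rw [hHval] at hHa
    show eval S (↑a) G = (∑ i : Fin M, c i • v i) a
    rw [Finset.sum_apply]
    simp only [Pi.smul_apply, smul_eq_mul, hv]
    exact sub_eq_zero.mp hHa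
  have hvmem : ∀ i, v i ∈ LinearMap.range E := fun i => ⟨F i, rfl⟩
  have hspanveq : Submodule.span 𝔽 (Set.range v) = evalSpan S Ω := by
    refine le_antisymm ?_ ?_
    · rw [hspan]
      exact Submodule.span_le.mpr (by rintro _ ⟨i, rfl⟩; exact hvmem i)
    · rw [hspan]
      rintro _ ⟨G, rfl⟩
      rw [key G]
      exact Submodule.sum_mem _ fun i _ =>
        Submodule.smul_mem _ _ (Submodule.subset_span ⟨i, rfl⟩)
  have hlin : LinearIndependent 𝔽 v := by
    rw [Fintype.linearIndependent_iff]
    intro g hg j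
    have hbj : b j ∈ Ω := hBsub ⟨j, rfl⟩
    have hgj := congrFun hg ⟨b j, hbj⟩
    simp only [Finset.sum_apply, Pi.smul_apply, smul_eq_mul, hv, Pi.zero_apply] at hgj
    simpa [hdual, mul_ite, Finset.sum_ite_eq'] using hgj
  have hrank : Module.rank 𝔽 ↥(evalSpan S Ω) = (M : Cardinal) := by
    haveI : Fintype ↥(Set.range v) := Set.fintypeRange v
    rw [← hspanveq, rank_span hlin, Cardinal.mk_fintype,
      Set.card_range_of_injective hlin.injective, Fintype.card_fin]
  have hMmem : M ∈ {k : ℕ | ∃ B : Finset (Fin n → 𝔽), IsPBasis S ↑B Ω ∧ B.card = k} := by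
    refine ⟨Finset.univ.image b, ?_, ?_⟩
    · have hcoe : (↑(Finset.univ.image b) : Set (Fin n → 𝔽)) = Set.range b := by
        simp
      rw [hcoe]
      exact ⟨hBsub, hBindep, hBclo⟩
    · rw [Finset.card_image_of_injective _ hbinj, Finset.card_univ, Fintype.card_fin]
  have hlower : ∀ k ∈ {k : ℕ | ∃ B : Finset (Fin n → 𝔽), IsPBasis S ↑B Ω ∧ B.card = k},
      M ≤ k := by
    rintro k ⟨B', hB', rfl⟩
    have hsub : ∀ x : ↥B', (x : Fin n → 𝔽) ∈ Ω := fun x => hB'.1 (Finset.mem_coe.mpr x.2)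
    set incl : ↥B' → ↥Ω := fun x => ⟨x, hsub x⟩ with hincl
    set φ : ↥(evalSpan S Ω) →ₗ[𝔽] (↥B' → 𝔽) :=
      (LinearMap.funLeft 𝔽 𝔽 incl).comp (evalSpan S Ω).subtype with hφdef
    have hφ : Function.Injective φ := by
      rw [injective_iff_map_eq_zero]
      intro u hu
      obtain ⟨G, hG⟩ : u.1 ∈ LinearMap.range E := hspan ▸ u.2
      have hGB : ∀ x ∈ (↑B' : Set (Fin n → 𝔽)), eval S x G = 0 := by
        intro x hx
        have hx' : x ∈ B' := Finset.mem_coe.mp hx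
        have h2 := congrFun hu ⟨x, hx'⟩
        simp only [hφdef, LinearMap.comp_apply, LinearMap.funLeft_apply,
          Submodule.subtype_apply, Pi.zero_apply] at h2
        rw [← hG] at h2
        exact h2
      apply Subtype.ext
      show u.1 = 0
      rw [← hG]
      funext a
      have haP : (a : Fin n → 𝔽) ∈ pClosure S ↑B' := by rw [hB'.2.2]; exact a.2
      exact haP G hGB
    have hcard := LinearMap.rank_le_of_injective φ hφ
    rw [hrank, rank_fun', Fintype.card_coe] at hcard
    exact_mod_cast hcard
  have hpr : pRank S Ω = M :=
    le_antisymm (Nat.sInf_le hMmem) (hlower _ (Nat.sInf_mem ⟨M, hMmem⟩))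
  exact ⟨hrank, hpr, hlin, hspanveq⟩
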